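/- Let M be a randomized mechanism mapping inputs in a set 𝒳 to probability measures on a measurable space Z, and let φ_1,…,φ_C : Z → [0,1] be measurable functions with Σ_{i=1}^C φ_i ≡ 1; define smoothed class probabilities p_i(X) = E_{z∼M(X)}[φ_i(z)] and the smoothed classifier g(X) = argmax_{1≤i≤C} p_i(X). Let ≈_ρ be a relation on 𝒳 that decomposes as the union of relations ≈_{ρ_1},…,≈_{ρ_N} (i.e., X ≈_ρ X' iff X ≈_{ρ_i} X' for some i), and let δ_i : ℝ → [0,1] be the privacy profile of M with respect to ≈_{ρ_i}. Fix an input X with g(X) = c_1, and suppose p_1, p_2 ∈ [0,1] satisfy p_1 > p_2, E_{z∼M(X)}[φ_{c_1}(z)] ≥ p_1, and E_{z∼M(X)}[φ_i(z)] ≤ p_2 for every i ≠ c_1. If min_{1≤i≤N} [ sup_{ε∈ℝ} e^{−ε}(p_1 − δ_i(ε)) + sup_{ε∈ℝ} e^{−ε}(1 − p_2 − δ_i(ε)) ] > 1, then g(X') = g(X) for every X' with X ≈_ρ X'. -/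

import Mathlib

open MeasureTheory Real Set

noncomputable section

/-- Hockey-stick divergence of order `a > 0`:
`D^HS_a(P‖Q) = sup_A (P(A) − a·Q(A))` over measurable sets `A`. -/
def hsDiv {Z : Type*} [MeasurableSpace Z] (a : ℝ) (P Q : Measure Z) : ℝ :=
  sSup {x : ℝ | ∃ A : Set Z, MeasurableSet A ∧ x = (P A).toReal - a * (Q A).toReal}

/-- The privacy profile of a mechanism `M` with respect to a neighboring relation `rel`:
`δ(ε) = sup_{X ≈ X'} D^HS_{e^ε}(M(X)‖M(X'))`. -/
def privacyProfile {𝒳 Z : Type*} [MeasurableSpace Z] (M : 𝒳 → Measure Z)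
    (rel : 𝒳 → 𝒳 → Prop) (ε : ℝ) : ℝ :=
  sSup {x : ℝ | ∃ X X' : 𝒳, rel X X' ∧ x = hsDiv (exp ε) (M X) (M X')}

/-- Tradeoff function `Λ(P‖Q)(α)`: the least type-II error
`E_Q[1 − φ]` over measurable tests `φ : Z → [0,1]` with `E_P[φ] = α`. -/
def tradeoff {Z : Type*} [MeasurableSpace Z] (P Q : Measure Z) (α : ℝ) : ℝ :=
  sInf {x : ℝ | ∃ φ : Z → ℝ, Measurable φ ∧ (∀ z, φ z ∈ Icc (0 : ℝ) 1) ∧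
    (∫ z, φ z ∂P) = α ∧ x = ∫ z, (1 - φ z) ∂Q}

/-- `M` satisfies `f`-differential privacy with respect to `rel`. -/
def fDP {𝒳 Z : Type*} [MeasurableSpace Z] (M : 𝒳 → Measure Z)
    (rel : 𝒳 → 𝒳 → Prop) (f : ℝ → ℝ) : Prop :=
  ∀ X X' : 𝒳, rel X X' → ∀ α ∈ Icc (0 : ℝ) 1, f α ≤ tradeoff (M X) (M X') α

/-- A tradeoff function: convex, continuous, non-increasing `[0,1] → [0,1]`
with `f α ≤ 1 − α`. -/
def IsTradeoffFun (f : ℝ → ℝ) : Prop :=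
  ConvexOn ℝ (Icc 0 1) f ∧ ContinuousOn f (Icc 0 1) ∧ AntitoneOn f (Icc 0 1) ∧
    ∀ α ∈ Icc (0 : ℝ) 1, f α ∈ Icc (0 : ℝ) 1 ∧ f α ≤ 1 - α

/-- `f` is the optimal tradeoff function of `M` with respect to `rel`. -/
def IsOptimalTradeoff {𝒳 Z : Type*} [MeasurableSpace Z] (M : 𝒳 → Measure Z)
    (rel : 𝒳 → 𝒳 → Prop) (f : ℝ → ℝ) : Prop :=
  IsTradeoffFun f ∧ fDP M rel f ∧
    ∀ g : ℝ → ℝ, IsTradeoffFun g → fDP M rel g → ∀ α ∈ Icc (0 : ℝ) 1, g α ≤ f α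

/-- Left-continuous inverse of a non-increasing function on `[0,1]`. -/
def leftInv (g : ℝ → ℝ) (α : ℝ) : ℝ :=
  sInf {t : ℝ | t ∈ Icc (0 : ℝ) 1 ∧ g t ≤ α}

/-- Convex conjugate of the `+∞`-extension to `ℝ` of a real-valued function on `[0,1]`:
`h*(s) = sup_{x ∈ [0,1]} (s·x − h(x))`. -/
def conjOn01 (h : ℝ → ℝ) (s : ℝ) : ℝ :=
  sSup {y : ℝ | ∃ x ∈ Icc (0 : ℝ) 1, y = s * x - h x}

set_option linter.unusedSectionVars false

section Aux

variable {Z : Type*} [MeasurableSpace Z] (P Q : Measure Z)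
  [IsProbabilityMeasure P] [IsProbabilityMeasure Q]

lemma hsDiv_set_bddAbove {a : ℝ} (ha : 0 ≤ a) :
    BddAbove {x : ℝ | ∃ A : Set Z, MeasurableSet A ∧
      x = (P A).toReal - a * (Q A).toReal} := by
  refine ⟨1, fun x hx => ?_⟩
  obtain ⟨A, hA, rfl⟩ := hx
  have h1 : (P A).toReal ≤ 1 := by
    have := measure_mono (subset_univ A) (μ := P)
    simpa using ENNReal.toReal_mono (by simp) this
  have h2 : 0 ≤ a * (Q A).toReal := mul_nonneg ha ENNReal.toReal_nonneg
  linarith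

lemma le_hsDiv {a : ℝ} (ha : 0 ≤ a) {A : Set Z} (hA : MeasurableSet A) :
    (P A).toReal - a * (Q A).toReal ≤ hsDiv a P Q :=
  le_csSup (hsDiv_set_bddAbove P Q ha) ⟨A, hA, rfl⟩

lemma hsDiv_le_one {a : ℝ} (ha : 0 ≤ a) : hsDiv a P Q ≤ 1 := by
  refine csSup_le ⟨0, ∅, MeasurableSet.empty, by simp⟩ fun x hx => ?_
  obtain ⟨A, hA, rfl⟩ := hx
  have h1 : (P A).toReal ≤ 1 := by
    have := measure_mono (subset_univ A) (μ := P)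
    simpa using ENNReal.toReal_mono (by simp) this
  have h2 : 0 ≤ a * (Q A).toReal := mul_nonneg ha ENNReal.toReal_nonneg
  linarith

lemma integrable_of_range01 {ψ : Z → ℝ} (hmeas : Measurable ψ)
    (hrange : ∀ z, ψ z ∈ Icc (0 : ℝ) 1) : Integrable ψ P := by
  refine Integrable.mono' (integrable_const 1) hmeas.aestronglyMeasurable
    (ae_of_all _ fun z => ?_)
  rw [Real.norm_eq_abs, abs_of_nonneg (hrange z).1]
  exact (hrange z).2

lemma key_dual_bound {ψ : Z → ℝ} (hmeas : Measurable ψ)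
    (hrange : ∀ z, ψ z ∈ Icc (0 : ℝ) 1) (ε : ℝ) :
    exp (-ε) * ((∫ z, ψ z ∂P) - hsDiv (exp ε) P Q) ≤ ∫ z, ψ z ∂Q := by
  set D := hsDiv (exp ε) P Q with hD
  have hintP : Integrable ψ P := integrable_of_range01 P hmeas hrange
  have hintQ : Integrable ψ Q := integrable_of_range01 Q hmeas hrange
  have hlayP : ∫ z, ψ z ∂P = ∫ t in Ioc (0:ℝ) 1, (P {z | t ≤ ψ z}).toReal :=
    hintP.integral_eq_integral_Ioc_meas_le (ae_of_all _ fun z => (hrange z).1)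
      (ae_of_all _ fun z => (hrange z).2)
  have hlayQ : ∫ z, ψ z ∂Q = ∫ t in Ioc (0:ℝ) 1, (Q {z | t ≤ ψ z}).toReal :=
    hintQ.integral_eq_integral_Ioc_meas_le (ae_of_all _ fun z => (hrange z).1)
      (ae_of_all _ fun z => (hrange z).2)
  -- measurability/integrability of the tail functions
  have measP : Measurable (fun t : ℝ => (P {z | t ≤ ψ z}).toReal) := by
    refine Measurable.ennreal_toReal (Antitone.measurable fun s t hst => ?_)
    exact measure_mono fun z hz => le_trans hst hz
  have measQ : Measurable (fun t : ℝ => (Q {z | t ≤ ψ z}).toReal) := by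
    refine Measurable.ennreal_toReal (Antitone.measurable fun s t hst => ?_)
    exact measure_mono fun z hz => le_trans hst hz
  have hbdP : IntegrableOn (fun t : ℝ => (P {z | t ≤ ψ z}).toReal) (Ioc (0:ℝ) 1) := by
    refine Integrable.mono' (((integrableOn_const_iff).mpr (Or.inr (by simp)) :
        IntegrableOn (fun _ : ℝ => (1:ℝ)) (Ioc 0 1) volume))
      measP.aestronglyMeasurable (ae_of_all _ fun t => ?_)
    rw [Real.norm_eq_abs, abs_of_nonneg ENNReal.toReal_nonneg]
    have := measure_mono (subset_univ {z | t ≤ ψ z}) (μ := P)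
    simpa using ENNReal.toReal_mono (by simp) this
  have hbdQ : IntegrableOn (fun t : ℝ => (Q {z | t ≤ ψ z}).toReal) (Ioc (0:ℝ) 1) := by
    refine Integrable.mono' (((integrableOn_const_iff).mpr (Or.inr (by simp)) :
        IntegrableOn (fun _ : ℝ => (1:ℝ)) (Ioc 0 1) volume))
      measQ.aestronglyMeasurable (ae_of_all _ fun t => ?_)
    rw [Real.norm_eq_abs, abs_of_nonneg ENNReal.toReal_nonneg]
    have := measure_mono (subset_univ {z | t ≤ ψ z}) (μ := Q)
    simpa using ENNReal.toReal_mono (by simp) this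
  have hptwise : ∀ t ∈ Ioc (0:ℝ) 1,
      (P {z | t ≤ ψ z}).toReal ≤ exp ε * (Q {z | t ≤ ψ z}).toReal + D := by
    intro t _
    have hAmeas : MeasurableSet {z | t ≤ ψ z} := hmeas measurableSet_Ici
    have := le_hsDiv P Q (le_of_lt (exp_pos ε)) hAmeas
    linarith
  have hmono : ∫ t in Ioc (0:ℝ) 1, (P {z | t ≤ ψ z}).toReal
      ≤ ∫ t in Ioc (0:ℝ) 1, (exp ε * (Q {z | t ≤ ψ z}).toReal + D) := by
    refine setIntegral_mono_on hbdP ?_ measurableSet_Ioc hptwise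
    exact (hbdQ.const_mul (exp ε)).add (((integrableOn_const_iff).mpr (Or.inr (by simp)) :
        IntegrableOn (fun _ : ℝ => D) (Ioc 0 1) volume))
  have hrhs : ∫ t in Ioc (0:ℝ) 1, (exp ε * (Q {z | t ≤ ψ z}).toReal + D)
      = exp ε * (∫ t in Ioc (0:ℝ) 1, (Q {z | t ≤ ψ z}).toReal) + D := by
    rw [integral_add (hbdQ.const_mul (exp ε)) (((integrableOn_const_iff).mpr (Or.inr (by simp)) :
        IntegrableOn (fun _ : ℝ => D) (Ioc 0 1) volume)),
      integral_const_mul, setIntegral_const]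
    simp
  have hmain : (∫ z, ψ z ∂P) ≤ exp ε * (∫ z, ψ z ∂Q) + D := by
    rw [hlayP, hlayQ]; rw [hrhs] at hmono; exact hmono
  have hexp : rexp (-ε) * rexp ε = 1 := by rw [← Real.exp_add]; simp
  have h1 : (∫ z, ψ z ∂P) - D ≤ exp ε * ∫ z, ψ z ∂Q := by linarith
  calc exp (-ε) * ((∫ z, ψ z ∂P) - D) ≤ exp (-ε) * (exp ε * ∫ z, ψ z ∂Q) :=
        mul_le_mul_of_nonneg_left h1 (exp_pos _).le
    _ = ∫ z, ψ z ∂Q := by rw [← mul_assoc, hexp, one_mul]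

end Aux

lemma hsDiv_le_privacyProfile {𝒳 Z : Type*} [MeasurableSpace Z]
    (M : 𝒳 → Measure Z) (hM : ∀ X, IsProbabilityMeasure (M X))
    (rel : 𝒳 → 𝒳 → Prop) (ε : ℝ) {X X' : 𝒳} (h : rel X X') :
    hsDiv (exp ε) (M X) (M X') ≤ privacyProfile M rel ε := by
  refine le_csSup ⟨1, fun x hx => ?_⟩ ⟨X, X', h, rfl⟩
  obtain ⟨Y, Y', _, rfl⟩ := hx
  haveI := hM Y; haveI := hM Y'
  exact hsDiv_le_one (M Y) (M Y') (exp_pos ε).le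

/-- Certification via the dual formulation of privacy: let `g` be the
smoothed classifier induced by a mechanism `M` and tests `φ₁,…,φ_C` summing to one,
`≈_ρ` a relation decomposing as the union of relations `≈_{ρ_1},…,≈_{ρ_N}` with privacy
profiles `δ_i`, and `X` an input predicted as `c₁` with probability bounds
`p₁ > p₂`. If `min_i [sup_ε e^{−ε}(p₁ − δ_i(ε)) + sup_ε e^{−ε}(1 − p₂ − δ_i(ε))] > 1`
then `g(X') = g(X)` for every `X'` with `X ≈_ρ X'`. -/
theorem smoothed_classifier_robust
    {𝒳 Z : Type*} [MeasurableSpace Z]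
    (M : 𝒳 → Measure Z) (hM : ∀ X, IsProbabilityMeasure (M X))
    (C : ℕ) (φ : Fin C → Z → ℝ)
    (hφmeas : ∀ i, Measurable (φ i))
    (hφrange : ∀ i z, φ i z ∈ Icc (0 : ℝ) 1)
    (hφsum : ∀ z, ∑ i, φ i z = 1)
    (g : 𝒳 → Fin C)
    (hg : ∀ X i, (∫ z, φ i z ∂(M X)) ≤ ∫ z, φ (g X) z ∂(M X))
    (N : ℕ) (relρ : 𝒳 → 𝒳 → Prop) (rels : Fin N → 𝒳 → 𝒳 → Prop)
    (hdecomp : ∀ X X', relρ X X' ↔ ∃ i, rels i X X')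
    (δ : Fin N → ℝ → ℝ)
    (hδ : ∀ i ε, δ i ε = privacyProfile M (rels i) ε)
    (X : 𝒳) (c₁ : Fin C)
    (hc₁ : g X = c₁)
    (p₁ p₂ : ℝ)
    (hp₁ : p₁ ∈ Icc (0 : ℝ) 1) (hp₂ : p₂ ∈ Icc (0 : ℝ) 1) (hp : p₂ < p₁)
    (hmaj : p₁ ≤ ∫ z, φ c₁ z ∂(M X))
    (hmin : ∀ i, i ≠ c₁ → (∫ z, φ i z ∂(M X)) ≤ p₂)
    (hcond : ∀ i : Fin N,
      1 < (⨆ ε : ℝ, exp (-ε) * (p₁ - δ i ε)) +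
          (⨆ ε : ℝ, exp (-ε) * (1 - p₂ - δ i ε))) :
    ∀ X' : 𝒳, relρ X X' → g X' = g X := by
  intro X' hrel
  obtain ⟨i, hi⟩ := (hdecomp X X').1 hrel
  haveI := hM X; haveI := hM X'
  have hDδ : ∀ ε : ℝ, hsDiv (exp ε) (M X) (M X') ≤ δ i ε := fun ε => by
    rw [hδ]; exact hsDiv_le_privacyProfile M hM (rels i) ε hi
  have hA : (⨆ ε : ℝ, exp (-ε) * (p₁ - δ i ε)) ≤ ∫ z, φ c₁ z ∂(M X') := by
    refine ciSup_le fun ε => le_trans ?_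
      (key_dual_bound (M X) (M X') (hφmeas c₁) (hφrange c₁) ε)
    have h1 : p₁ - δ i ε ≤ (∫ z, φ c₁ z ∂(M X)) - hsDiv (exp ε) (M X) (M X') := by
      have := hDδ ε; linarith
    exact mul_le_mul_of_nonneg_left h1 (exp_pos _).le
  have key2 : ∀ j : Fin C, j ≠ c₁ →
      (∫ z, φ j z ∂(M X')) < ∫ z, φ c₁ z ∂(M X') := by
    intro j hj
    set ψ : Z → ℝ := fun z => 1 - φ j z with hψ
    have hψmeas : Measurable ψ := measurable_const.sub (hφmeas j)
    have hψrange : ∀ z, ψ z ∈ Icc (0:ℝ) 1 := fun z => by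
      have := hφrange j z
      constructor <;> simp only [hψ] <;> [linarith [this.2]; linarith [this.1]]
    have hint : ∀ Y : 𝒳, (∫ z, ψ z ∂(M Y)) = 1 - ∫ z, φ j z ∂(M Y) := by
      intro Y
      haveI := hM Y
      rw [hψ, integral_sub (integrable_const 1)
        (integrable_of_range01 (M Y) (hφmeas j) (hφrange j))]
      simp
    have hB : (⨆ ε : ℝ, exp (-ε) * (1 - p₂ - δ i ε)) ≤ ∫ z, ψ z ∂(M X') := by
      refine ciSup_le fun ε => le_trans ?_
        (key_dual_bound (M X) (M X') hψmeas hψrange ε)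
      have h2 : 1 - p₂ - δ i ε ≤ (∫ z, ψ z ∂(M X)) - hsDiv (exp ε) (M X) (M X') := by
        have := hDδ ε; have := hmin j hj; rw [hint X]; linarith
      exact mul_le_mul_of_nonneg_left h2 (exp_pos _).le
    have := hcond i
    rw [hint X'] at hB
    linarith
  rw [hc₁]
  by_contra hne
  have h1 := key2 (g X') hne
  have h2 := hg X' c₁
  linarith
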